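/- Let K ⊆ ℂ be a closed set and w ∈ 𝕋 an element of infinite order (w^n ≠ 1 for all n ≥ 1) such that w·K ⊆ K. Then K is circular: for every μ ∈ K and every ν ∈ ℂ with |ν| = |μ|, ν ∈ K. -/

import Mathlib

open Complex Set

private lemma circle_pow_dense (w : ℂ) (hw : ‖w‖ = 1)
    (hord : ∀ n : ℕ, 1 ≤ n → w ^ n ≠ 1) :
    ∀ z : ℂ, ‖z‖ = 1 → z ∈ closure (Set.range (fun n : ℕ => w ^ n)) := by
  intro z hz
  have hwmem : w ∈ Metric.sphere (0:ℂ) 1 := by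
    simpa using hw
  set u : Circle := ⟨w, hwmem⟩ with hu
  set θ : ℝ := Complex.arg w with hθ
  set S : AddSubgroup ℝ := AddSubgroup.closure {θ, 2 * Real.pi} with hS
  have hSdense : Dense (S : Set ℝ) := by
    rcases S.dense_or_cyclic with hd | ⟨a, ha⟩
    · exact hd
    · exfalso
      have hθS : θ ∈ S := AddSubgroup.subset_closure (by simp)
      have h2πS : (2 * Real.pi : ℝ) ∈ S := AddSubgroup.subset_closure (by simp)
      rw [ha, AddSubgroup.mem_closure_singleton] at hθS h2πS
      obtain ⟨m, hm⟩ := hθS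
      obtain ⟨k, hk⟩ := h2πS
      have hk0 : k ≠ 0 := by
        rintro rfl
        simp at hk
      -- k • θ = m • (2π)
      have hkey : (k : ℝ) * θ = (m : ℝ) * (2 * Real.pi) := by
        have h1 : k • (m • a) = m • (k • a) := smul_comm k m a
        rw [hm, hk] at h1
        push_cast [zsmul_eq_mul] at h1
        linarith [h1]
      have hwexp : w = Complex.exp (θ * Complex.I) := by
        have := Complex.norm_mul_exp_arg_mul_I w
        rw [hw] at this
        have h1 : cexp (↑w.arg * Complex.I) = w := by simpa using this
        exact h1.symm
      have hz : w ^ (k : ℤ) = 1 := by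
        rw [hwexp, ← Complex.exp_int_mul]
        have : (k : ℂ) * (θ * Complex.I) = (m : ℂ) * (2 * Real.pi * Complex.I) := by
          have := congrArg (fun x : ℝ => (x : ℂ) * Complex.I) hkey
          push_cast at this
          ring_nf at this ⊢
          linear_combination this
        rw [this]
        have h2 := Complex.exp_int_mul_two_pi_mul_I m
        rw [← h2]
      have hnat : w ^ (k.natAbs) = 1 := by
        rcases Int.natAbs_eq k with h | h
        · rw [← zpow_natCast, ← h, hz]
        · rw [← zpow_natCast]
          have : ((k.natAbs : ℤ)) = -k := by omega
          rw [this, zpow_neg, hz, inv_one]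
      exact hord k.natAbs (by omega) hnat
  -- image under Circle.exp is contained in zpowers of u
  have hsub : Circle.exp '' (S : Set ℝ) ⊆ Set.range (fun n : ℤ => u ^ n) := by
    rintro _ ⟨t, ht, rfl⟩
    have : Circle.exp t ∈ Subgroup.zpowers u := by
      induction ht using AddSubgroup.closure_induction with
      | mem x hx =>
        rcases hx with rfl | rfl
        · refine ⟨1, ?_⟩
          ext
          simp only [zpow_one, hu]
          rw [Circle.coe_exp]
          have := Complex.norm_mul_exp_arg_mul_I w
          rw [hw] at this
          have h1 : cexp (↑w.arg * Complex.I) = w := by simpa using this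
          change ((u ^ (1:ℤ) : Circle) : ℂ) = cexp (↑θ * I)
          rw [zpow_one]
          exact h1.symm
        · refine ⟨0, ?_⟩
          simp [Circle.exp_two_pi]
      | zero =>
        simp only [Circle.exp_zero]
        exact one_mem _
      | add x y _ _ hx hy =>
        rw [Circle.exp_add]
        exact mul_mem hx hy
      | neg x _ hx =>
        rw [Circle.exp_neg]
        exact inv_mem hx
    obtain ⟨n, hn⟩ := this
    exact ⟨n, hn⟩
  have hexp_surj : Function.Surjective Circle.exp := fun x => ⟨Complex.arg x, Circle.exp_arg x⟩
  have hdz : Dense (Set.range (fun n : ℤ => u ^ n)) := by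
    have hd := hexp_surj.denseRange.dense_image Circle.exp.continuous hSdense
    exact hd.mono hsub
  have hdn : Dense (Set.range (fun n : ℕ => u ^ n)) := by
    rw [dense_iff_closure_eq] at hdz ⊢
    rw [← closure_range_zpow_eq_pow]
    exact hdz
  have hzmem : z ∈ Metric.sphere (0:ℂ) 1 := by
    simpa using hz
  set c : Circle := ⟨z, hzmem⟩ with hc
  have hcc : c ∈ closure (Set.range (fun n : ℕ => u ^ n)) := hdn c
  have hcont : Continuous (fun x : Circle => (x : ℂ)) := continuous_subtype_val
  have := image_closure_subset_closure_image (s := Set.range fun n : ℕ => u ^ n) hcont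
  have hmem : z ∈ closure ((fun x : Circle => (x : ℂ)) '' Set.range (fun n : ℕ => u ^ n)) :=
    this ⟨c, hcc, rfl⟩
  refine closure_mono ?_ hmem
  rintro _ ⟨_, ⟨n, rfl⟩, rfl⟩
  refine ⟨n, ?_⟩
  induction n with
  | zero => simp
  | succ n ih =>
    simp only at ih ⊢
    rw [pow_succ, pow_succ, Circle.coe_mul, ← ih]

theorem closed_set_circular_of_irrational_rotation
    (K : Set ℂ) (hK : IsClosed K)
    (w : ℂ) (hw : ‖w‖ = 1)
    (hord : ∀ n : ℕ, 1 ≤ n → w ^ n ≠ 1)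
    (hinv : ∀ z ∈ K, w * z ∈ K) :
    ∀ μ ∈ K, ∀ ν : ℂ, ‖ν‖ = ‖μ‖ → ν ∈ K := by
  intro μ hμ ν hν
  rcases eq_or_ne μ 0 with rfl | hμ0
  · have : ν = 0 := by simpa using hν
    simpa [this] using hμ
  have hc : ‖ν / μ‖ = 1 := by
    rw [norm_div, hν, div_self]
    simpa using hμ0
  have hcl := circle_pow_dense w hw hord (ν / μ) hc
  have horbit : ∀ n : ℕ, μ * w ^ n ∈ K := by
    intro n
    induction n with
    | zero => simpa using hμ
    | succ n ih =>
      have h := hinv _ ih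
      have : μ * w ^ (n + 1) = w * (μ * w ^ n) := by ring
      rw [this]
      exact h
  have hco : Continuous fun z : ℂ => μ * z := by continuity
  have himg := image_closure_subset_closure_image (s := Set.range fun n : ℕ => w ^ n) hco
  have hνmem : ν ∈ closure ((fun z => μ * z) '' Set.range fun n : ℕ => w ^ n) := by
    have hνeq : ν = μ * (ν / μ) := by field_simp
    rw [hνeq]
    exact himg ⟨ν / μ, hcl, rfl⟩
  refine hK.closure_subset_iff.mpr ?_ hνmem
  rintro _ ⟨_, ⟨n, rfl⟩, rfl⟩
  exact horbit n
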